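/- Let φ: ℝ → ℝ satisfy −ε/2 ≤ φ(x) ≤ x⁺ for all x, where ε > 0 and x⁺ = max(x,0). Let Q̃ be symmetric positive definite, p ∈ ℝ^K, κ > 0, and define V(y) = (e'y)² + κ(y − pφ(e'y))'Q̃(y − pφ(e'y)). Then there exist constants C₁ > 0 and C₂ ≥ 0 such that V(y) ≥ C₁|y|² − C₂ for all y; in particular V(y) → ∞ as |y| → ∞. -/

import Mathlib

open Matrix Filter

lemma posdef_quad_lower {K : ℕ} (Q : Matrix (Fin K) (Fin K) ℝ) (hQ : Q.PosDef) :
    ∃ μ > (0:ℝ), ∀ x : Fin K → ℝ, μ * ∑ i, (x i) ^ 2 ≤ dotProduct x (Q *ᵥ x) := by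
  rcases Nat.eq_zero_or_pos K with hK | hK
  · refine ⟨1, one_pos, fun x => ?_⟩
    subst hK
    simp [dotProduct]
  · have hcont : Continuous fun x : EuclideanSpace ℝ (Fin K) =>
        dotProduct (x : Fin K → ℝ) (Q *ᵥ (x : Fin K → ℝ)) := by
      simp only [dotProduct, Matrix.mulVec]
      refine continuous_finset_sum _ fun i _ => ?_
      refine Continuous.mul (EuclideanSpace.proj i).continuous
        (continuous_finset_sum _ fun j _ => ?_)
      exact continuous_const.mul (EuclideanSpace.proj j).continuous
    have hne : (Metric.sphere (0 : EuclideanSpace ℝ (Fin K)) 1).Nonempty := by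
      refine ⟨EuclideanSpace.single ⟨0, hK⟩ 1, ?_⟩
      simp [EuclideanSpace.norm_single]
    obtain ⟨x₀, hx₀S, hmin⟩ :=
      (isCompact_sphere (0 : EuclideanSpace ℝ (Fin K)) 1).exists_isMinOn hne
        hcont.continuousOn
    have hx₀norm : ‖x₀‖ = 1 := by simpa using hx₀S
    have hx₀ne : (x₀ : Fin K → ℝ) ≠ 0 := by
      intro h
      have hz : x₀ = 0 := by ext i; exact congrFun h i
      rw [hz] at hx₀norm
      simp at hx₀norm
    have hμpos : 0 < dotProduct (x₀ : Fin K → ℝ) (Q *ᵥ (x₀ : Fin K → ℝ)) := by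
      have := hQ.dotProduct_mulVec_pos hx₀ne
      simpa using this
    refine ⟨_, hμpos, fun x => ?_⟩
    by_cases hx : x = 0
    · subst hx; simp
    · set x' : EuclideanSpace ℝ (Fin K) := (WithLp.equiv 2 (Fin K → ℝ)).symm x with hx'
      have hx'ne : x' ≠ 0 := by
        intro h; exact hx (by ext i; exact congrFun (congrArg (WithLp.equiv 2 (Fin K → ℝ)) h) i)
      have hn : 0 < ‖x'‖ := norm_pos_iff.mpr hx'ne
      have hsum : ∑ i, (x i) ^ 2 = ‖x'‖ ^ 2 := by
        rw [EuclideanSpace.norm_eq, Real.sq_sqrt (by positivity)]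
        simp only [Real.norm_eq_abs, sq_abs]
        rfl
      have hmem : (‖x'‖⁻¹ • x') ∈ Metric.sphere (0 : EuclideanSpace ℝ (Fin K)) 1 := by
        rw [mem_sphere_zero_iff_norm, norm_smul]
        simp [abs_of_pos hn, inv_mul_cancel₀ hn.ne']
      have hkey := hmin hmem
      simp only [Set.mem_setOf_eq] at hkey
      have hcoe : ((‖x'‖⁻¹ • x' : EuclideanSpace ℝ (Fin K)) : Fin K → ℝ) = ‖x'‖⁻¹ • x := rfl
      rw [hcoe, Matrix.mulVec_smul, smul_dotProduct, dotProduct_smul,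
        smul_eq_mul, smul_eq_mul] at hkey
      rw [hsum]
      have h2 := mul_le_mul_of_nonneg_right hkey (sq_nonneg ‖x'‖)
      have hne' : ‖x'‖ ≠ 0 := hn.ne'
      calc dotProduct (x₀ : Fin K → ℝ) (Q *ᵥ (x₀ : Fin K → ℝ)) * ‖x'‖ ^ 2
          ≤ ‖x'‖⁻¹ * (‖x'‖⁻¹ * dotProduct x (Q *ᵥ x)) * ‖x'‖ ^ 2 := h2
        _ = dotProduct x (Q *ᵥ x) := by
            field_simp


set_option maxHeartbeats 1000000 in
/-- Let `φ : ℝ → ℝ` satisfy `−ε/2 ≤ φ(x) ≤ x⁺` and `x⁺ − φ(x) ≤ ε/2` for all `x`,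
with `ε > 0`. Let `Q̃` be symmetric positive definite, `p ∈ ℝ^K`, `κ > 0`, and
`V(y) = (e'y)² + κ (y − pφ(e'y))' Q̃ (y − pφ(e'y))`. Then there exist `C₁ > 0` and
`C₂ ≥ 0` with `V(y) ≥ C₁|y|² − C₂` for all `y`; in particular `V(y) → ∞` as `|y| → ∞`. -/
theorem lyapunov_function_coercive {K : ℕ} (ε : ℝ) (hε : 0 < ε)
    (φ : ℝ → ℝ)
    (hφ₁ : ∀ x, -(ε / 2) ≤ φ x) (hφ₂ : ∀ x, φ x ≤ max x 0)
    (hφ₃ : ∀ x, max x 0 - φ x ≤ ε / 2)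
    (Q : Matrix (Fin K) (Fin K) ℝ) (hQsymm : Q.IsSymm) (hQ : Q.PosDef)
    (p : Fin K → ℝ) (κ : ℝ) (hκ : 0 < κ) :
    (∃ C₁ > (0:ℝ), ∃ C₂ ≥ (0:ℝ), ∀ y : Fin K → ℝ,
      C₁ * (∑ i, (y i) ^ 2) - C₂ ≤
        (∑ i, y i) ^ 2 +
          κ * dotProduct (fun i => y i - p i * φ (∑ j, y j))
            (Q *ᵥ fun i => y i - p i * φ (∑ j, y j))) ∧
    Filter.Tendsto
      (fun y : EuclideanSpace ℝ (Fin K) =>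
        (∑ i, y i) ^ 2 +
          κ * dotProduct (fun i => y i - p i * φ (∑ j, y j))
            (Q *ᵥ fun i => y i - p i * φ (∑ j, y j)))
      (Filter.cocompact (EuclideanSpace ℝ (Fin K))) Filter.atTop := by
  obtain ⟨μ, hμpos, hμ⟩ := posdef_quad_lower Q hQ
  set P := ∑ i, (p i) ^ 2 with hP
  have hPnn : 0 ≤ P := Finset.sum_nonneg fun i _ => sq_nonneg _
  set c := min 1 (κ * μ) with hc
  have hcpos : 0 < c := lt_min one_pos (mul_pos hκ hμpos)
  have hc1 : c ≤ 1 := min_le_left _ _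
  have hc2 : c ≤ κ * μ := min_le_right _ _
  set M := 2 + 4 * P with hM
  have hMpos : (0:ℝ) < M := by positivity
  clear_value P c M
  have key : ∀ y : Fin K → ℝ,
      (c / M) * (∑ i, (y i) ^ 2) - c * P * ε ^ 2 / M ≤
        (∑ i, y i) ^ 2 +
          κ * dotProduct (fun i => y i - p i * φ (∑ j, y j))
            (Q *ᵥ fun i => y i - p i * φ (∑ j, y j)) := by
    intro y
    set s := ∑ i, y i with hs
    set F := φ s with hF
    set z : Fin K → ℝ := fun i => y i - p i * F with hz
    set A := ∑ i, (z i) ^ 2 with hA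
    set B := ∑ i, (y i) ^ 2 with hB
    have hAnn : 0 ≤ A := Finset.sum_nonneg fun i _ => sq_nonneg _
    have h1 : κ * (μ * A) ≤ κ * dotProduct z (Q *ᵥ z) :=
      mul_le_mul_of_nonneg_left (hμ z) hκ.le
    clear_value s F z A B
    have hF1 : -(ε / 2) ≤ F := by rw [hF]; exact hφ₁ s
    have hF2 : F ≤ max s 0 := by rw [hF]; exact hφ₂ s
    have hF3 : F ^ 2 ≤ 2 * s ^ 2 + ε ^ 2 / 2 := by
      rcases le_or_gt s 0 with h | h
      · have : F ≤ 0 := hF2.trans (by simp [h])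
        nlinarith [mul_nonneg (neg_nonneg.2 this) (by linarith : (0:ℝ) ≤ F + ε / 2)]
      · have hFs : F ≤ s := hF2.trans (by simp [h.le])
        nlinarith [mul_nonneg (by linarith : (0:ℝ) ≤ s - F) (by linarith : (0:ℝ) ≤ F + ε / 2),
          sq_nonneg (s - ε / 2), sq_nonneg s]
    have h2 : B ≤ 2 * A + 2 * P * F ^ 2 := by
      have hpt : ∀ i, (y i) ^ 2 ≤ 2 * (z i) ^ 2 + 2 * ((p i) ^ 2 * F ^ 2) := by
        intro i
        have hyi : y i = z i + p i * F := by simp [hz]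
        rw [hyi]
        nlinarith [sq_nonneg (z i - p i * F)]
      calc B = ∑ i, (y i) ^ 2 := hB
        _ ≤ ∑ i, (2 * (z i) ^ 2 + 2 * ((p i) ^ 2 * F ^ 2)) :=
            Finset.sum_le_sum fun i _ => hpt i
        _ = 2 * A + 2 * P * F ^ 2 := by
            rw [Finset.sum_add_distrib, ← Finset.mul_sum, ← Finset.mul_sum, ← Finset.sum_mul,
              ← hA, ← hP]
            ring
    have hBle : B ≤ 2 * A + 4 * P * s ^ 2 + P * ε ^ 2 := by
      nlinarith [mul_le_mul_of_nonneg_left hF3 (by linarith : (0:ℝ) ≤ 2 * P)]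
    have hmain : (c / M) * B - c * P * ε ^ 2 / M ≤ s ^ 2 + κ * (μ * A) := by
      rw [div_mul_eq_mul_div, div_sub_div_same, div_le_iff₀ hMpos]
      have hs2 : 0 ≤ s ^ 2 := sq_nonneg s
      have e1 : c * B ≤ c * (2 * A + 4 * P * s ^ 2 + P * ε ^ 2) :=
        mul_le_mul_of_nonneg_left hBle hcpos.le
      have e2 : c * A ≤ κ * μ * A := mul_le_mul_of_nonneg_right hc2 hAnn
      have e3 : c * (P * s ^ 2) ≤ P * s ^ 2 :=
        mul_le_of_le_one_left (mul_nonneg hPnn hs2) hc1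
      have e4 : c * s ^ 2 ≤ s ^ 2 := mul_le_of_le_one_left hs2 hc1
      have e5 : 0 ≤ P * (κ * μ * A) :=
        mul_nonneg hPnn (mul_nonneg (mul_pos hκ hμpos).le hAnn)
      have e6 : 0 ≤ P * s ^ 2 := mul_nonneg hPnn hs2
      rw [hM]
      nlinarith [e1, e2, e3, e4, e5, e6]
    linarith [h1, hmain]
  have hC₂nn : (0:ℝ) ≤ c * P * ε ^ 2 / M := by positivity
  refine ⟨⟨c / M, div_pos hcpos hMpos, c * P * ε ^ 2 / M, hC₂nn, key⟩, ?_⟩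
  have hnormsq : ∀ y : EuclideanSpace ℝ (Fin K), ∑ i, (y i) ^ 2 = ‖y‖ ^ 2 := by
    intro y
    rw [EuclideanSpace.norm_eq, Real.sq_sqrt (by positivity)]
    simp [Real.norm_eq_abs, sq_abs]
  have hg : Tendsto (fun y : EuclideanSpace ℝ (Fin K) => (c / M) * ‖y‖ ^ 2 - c * P * ε ^ 2 / M)
      (cocompact (EuclideanSpace ℝ (Fin K))) atTop := by
    have h1 : Tendsto (fun y : EuclideanSpace ℝ (Fin K) => ‖y‖ ^ 2)
        (cocompact (EuclideanSpace ℝ (Fin K))) atTop :=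
      (tendsto_pow_atTop (two_ne_zero)).comp tendsto_norm_cocompact_atTop
    have h2 := h1.const_mul_atTop (div_pos hcpos hMpos)
    exact tendsto_atTop_add_const_right _ (-(c * P * ε ^ 2 / M)) h2
  refine tendsto_atTop_mono (fun y => ?_) hg
  have := key y
  rw [hnormsq y] at this
  exact this
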